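/- Let f₁, f₂ be L-smooth and concave, x ∈ R^n with ∇f₁(x), ∇f₂(x) nonzero and ∇f₂(x) ∉ C_{∇f₁(x)}^Δ, and let u be the hypercone projection of ∇f₂(x) onto C_{∇f₁(x)}^Δ. Then for x⁺ = x + α u: f₁(x⁺) ≥ f₁(x) + α sin(Δ+φ)‖∇f₂(x)‖ (sin Δ ‖∇f₁(x)‖ − (Lα/2) sin(Δ+φ)‖∇f₂(x)‖), where φ is the angle between the gradients. In particular f₁(x⁺) ≥ f₁(x) whenever α ≤ 2 sin Δ ‖∇f₁(x)‖ / (L sin(Δ+φ)‖∇f₂(x)‖). -/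

import Mathlib

open Real RealInnerProductSpace InnerProductGeometry

open Filter in
private lemma concave_grad_ineq {n : ℕ} {f : EuclideanSpace ℝ (Fin n) → ℝ}
    (hdiff : Differentiable ℝ f) (hconc : ConcaveOn ℝ Set.univ f)
    (a b : EuclideanSpace ℝ (Fin n)) :
    f b ≤ f a + ⟪gradient f a, b - a⟫ := by
  set γ : ℝ →ᵃ[ℝ] EuclideanSpace ℝ (Fin n) := AffineMap.lineMap a b with hγdef
  have hγd : ∀ t : ℝ, HasDerivAt γ (b - a) t := fun t => AffineMap.hasDerivAt_lineMap
  have hgd : ∀ t : ℝ, HasDerivAt (f ∘ γ) ⟪gradient f (γ t), b - a⟫ t := by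
    intro t
    have hf : HasFDerivAt f ((InnerProductSpace.toDual ℝ _) (gradient f (γ t))) (γ t) :=
      (hdiff (γ t)).hasGradientAt
    simpa [InnerProductSpace.toDual_apply_apply] using hf.comp_hasDerivAt t (hγd t)
  have hcg : ConcaveOn ℝ Set.univ (f ∘ γ) := by
    simpa using hconc.comp_affineMap γ
  have h := hcg.slope_le_of_hasDerivAt (Set.mem_univ (0:ℝ)) (Set.mem_univ (1:ℝ))
    one_pos (hgd 0)
  have h0 : γ (0:ℝ) = a := by simp [hγdef]
  have h1 : γ (1:ℝ) = b := by simp [hγdef]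
  rw [slope_def_field] at h
  simp only [Function.comp_apply, h0, h1] at h
  have h2 : (f b - f a) / (1 - 0) = f b - f a := by norm_num
  rw [h2] at h
  linarith

open Filter in
private lemma descent_lemma {n : ℕ} {f : EuclideanSpace ℝ (Fin n) → ℝ} {L : ℝ}
    (hdiff : Differentiable ℝ f) (hconc : ConcaveOn ℝ Set.univ f)
    (hL : ∀ y z : EuclideanSpace ℝ (Fin n), ‖gradient f y - gradient f z‖ ≤ L * ‖y - z‖)
    (x v : EuclideanSpace ℝ (Fin n)) :
    f (x + v) ≥ f x + ⟪gradient f x, v⟫ - L / 2 * ‖v‖ ^ 2 := by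
  set c : ℝ := ⟪gradient f x, v⟫ with hc
  set q : ℝ := L * ‖v‖ ^ 2 with hq
  have key : ∀ N : ℕ, 0 < N → ∀ i : ℕ, i ≤ N →
      f (x + ((i : ℝ) / N) • v) ≥ f x + ((i : ℝ) / N) * c
        - ((i : ℝ) * ((i : ℝ) + 1)) / (2 * (N : ℝ) ^ 2) * q := by
    intro N hN
    have hNR : (0 : ℝ) < N := by exact_mod_cast hN
    intro i
    induction i with
    | zero => intro _; simp
    | succ i ih =>
      intro hiN
      have ih' := ih (le_of_lt (Nat.lt_of_succ_le hiN))
      set a : EuclideanSpace ℝ (Fin n) := x + (((i : ℝ) + 1) / N) • v with ha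
      set b : EuclideanSpace ℝ (Fin n) := x + ((i : ℝ) / N) • v with hb
      have hba : b - a = (-(1 / (N : ℝ))) • v := by
        rw [ha, hb, add_sub_add_left_eq_sub, ← sub_smul]
        congr 1
        field_simp
        ring
      have hax : a - x = (((i : ℝ) + 1) / N) • v := by rw [ha]; abel
      have h1 : f b ≤ f a + ⟪gradient f a, b - a⟫ :=
        concave_grad_ineq hdiff hconc a b
      rw [hba, real_inner_smul_right] at h1
      -- bound on the inner product
      have h2 : ⟪gradient f a, v⟫ ≥ c - (((i : ℝ) + 1) / N) * q := by
        have e1 : ⟪gradient f a, v⟫ - c = ⟪gradient f a - gradient f x, v⟫ := by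
          rw [inner_sub_left]
        have e2 : ⟪gradient f a - gradient f x, v⟫ ≥ -(‖gradient f a - gradient f x‖ * ‖v‖) := by
          have := abs_real_inner_le_norm (gradient f a - gradient f x) v
          cases abs_le.mp this with
          | intro h _ => linarith
        have e3 : ‖gradient f a - gradient f x‖ ≤ L * ‖a - x‖ := hL a x
        have e4 : ‖a - x‖ = (((i : ℝ) + 1) / N) * ‖v‖ := by
          rw [hax, norm_smul]
          congr 1
          rw [Real.norm_eq_abs, abs_of_nonneg]
          positivity
        have hvnn : (0 : ℝ) ≤ ‖v‖ := norm_nonneg _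
        have e5 : ‖gradient f a - gradient f x‖ * ‖v‖ ≤ (((i : ℝ) + 1) / N) * q := by
          calc ‖gradient f a - gradient f x‖ * ‖v‖ ≤ (L * ‖a - x‖) * ‖v‖ := by
                exact mul_le_mul_of_nonneg_right e3 hvnn
            _ = (((i : ℝ) + 1) / N) * q := by rw [e4, hq]; ring
        linarith
      have hNinv : (0 : ℝ) ≤ 1 / (N : ℝ) := by positivity
      have h4 : (1 / (N : ℝ)) * ⟪gradient f a, v⟫ ≥
          (1 / (N : ℝ)) * (c - (((i : ℝ) + 1) / N) * q) :=
        mul_le_mul_of_nonneg_left h2 hNinv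
      have h5 : f a ≥ f b + (1 / (N : ℝ)) * (c - (((i : ℝ) + 1) / N) * q) := by
        have : inner ℝ (gradient f a) v = ⟪gradient f a, v⟫ := rfl
        nlinarith [h1, h4]
      have hid : f x + ((i : ℝ) / N) * c - ((i : ℝ) * ((i : ℝ) + 1)) / (2 * (N : ℝ) ^ 2) * q
          + (1 / (N : ℝ)) * (c - (((i : ℝ) + 1) / N) * q)
          = f x + (((i : ℕ) + 1 : ℕ) : ℝ) / N * c
            - ((((i : ℕ) + 1 : ℕ) : ℝ) * ((((i : ℕ) + 1 : ℕ) : ℝ) + 1)) / (2 * (N : ℝ) ^ 2) * q := by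
        push_cast
        field_simp
        ring
      push_cast at hid ⊢
      linarith [ih', h5, hid.ge, hid.le]
  -- take the limit N → ∞
  have hfin : ∀ N : ℕ, 0 < N → f (x + v) ≥ f x + c - q / 2 - q / 2 / N := by
    intro N hN
    have hNR : (0 : ℝ) < N := by exact_mod_cast hN
    have h := key N hN N le_rfl
    rw [div_self (ne_of_gt hNR), one_smul] at h
    have : ((N : ℝ) * ((N : ℝ) + 1)) / (2 * (N : ℝ) ^ 2) * q = (1 / 2) * q + q / 2 / N := by
      field_simp
    linarith [h, this.le, this.ge]
  have htend : Tendsto (fun N : ℕ => f x + c - q / 2 - q / 2 / N) atTop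
      (nhds (f x + c - q / 2 - 0)) :=
    (tendsto_const_nhds.sub (tendsto_const_div_atTop_nhds_zero_nat (q / 2)))
  have hev : ∀ᶠ N : ℕ in atTop, f x + c - q / 2 - q / 2 / N ≤ f (x + v) := by
    filter_upwards [eventually_gt_atTop 0] with N hN using hfin N hN
  have := le_of_tendsto htend hev
  rw [sub_zero] at this
  linarith [this]

/-- Taking a step along the hypercone projection `u` of `∇f₂(x)` onto the cone of
`∇f₁(x)` does not decrease `f₁` for a small enough step size. -/
theorem cone_step_preserves_f1 {n : ℕ} (f₁ f₂ : EuclideanSpace ℝ (Fin n) → ℝ)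
    (L Δ φ α : ℝ) (x u : EuclideanSpace ℝ (Fin n))
    (hdiff₁ : Differentiable ℝ f₁) (hdiff₂ : Differentiable ℝ f₂)
    (hconc₁ : ConcaveOn ℝ Set.univ f₁) (hconc₂ : ConcaveOn ℝ Set.univ f₂)
    (hL₁ : ∀ y z : EuclideanSpace ℝ (Fin n), ‖gradient f₁ y - gradient f₁ z‖ ≤ L * ‖y - z‖)
    (hL₂ : ∀ y z : EuclideanSpace ℝ (Fin n), ‖gradient f₂ y - gradient f₂ z‖ ≤ L * ‖y - z‖)
    (hLpos : 0 < L)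
    (hg₁ : gradient f₁ x ≠ 0) (hg₂ : gradient f₂ x ≠ 0)
    (hΔ0 : 0 < Δ) (hΔ1 : Δ < π / 2)
    (hφ : φ = angle (gradient f₁ x) (gradient f₂ x))
    (hφ1 : π / 2 - Δ < φ) (hφ2 : φ < π)
    (hu : u = ((Real.cos Δ / Real.sin φ) * Real.sin (Δ + φ)) •
      (gradient f₂ x + ((‖gradient f₂ x‖ / ‖gradient f₁ x‖) *
        (Real.sin φ * Real.tan Δ - Real.cos φ)) • gradient f₁ x))
    (hα : 0 ≤ α) :
    f₁ (x + α • u) ≥ f₁ x + α * Real.sin (Δ + φ) * ‖gradient f₂ x‖ *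
      (Real.sin Δ * ‖gradient f₁ x‖ - L * α / 2 * Real.sin (Δ + φ) * ‖gradient f₂ x‖) ∧
    (α ≤ 2 * Real.sin Δ * ‖gradient f₁ x‖ / (L * Real.sin (Δ + φ) * ‖gradient f₂ x‖) →
      f₁ (x + α • u) ≥ f₁ x) := by
  set g₁ := gradient f₁ x with hg1d
  set g₂ := gradient f₂ x with hg2d
  clear_value g₁ g₂
  have hn₁ : (0:ℝ) < ‖g₁‖ := norm_pos_iff.mpr hg₁
  have hn₂ : (0:ℝ) < ‖g₂‖ := norm_pos_iff.mpr hg₂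
  have hφ0 : 0 < φ := by linarith
  have hsinφ : 0 < Real.sin φ := Real.sin_pos_of_pos_of_lt_pi hφ0 hφ2
  have hcosΔ : 0 < Real.cos Δ := Real.cos_pos_of_mem_Ioo ⟨by linarith [Real.pi_pos], hΔ1⟩
  have hsinΔ : 0 < Real.sin Δ := Real.sin_pos_of_pos_of_lt_pi hΔ0 (by linarith [Real.pi_pos, hΔ1])
  have hinner12 : ⟪g₁, g₂⟫ = ‖g₁‖ * ‖g₂‖ * Real.cos φ := by
    rw [hφ, cos_angle]
    field_simp
  have htan : Real.tan Δ = Real.sin Δ / Real.cos Δ := Real.tan_eq_sin_div_cos Δ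
  have hinner1u : ⟪g₁, u⟫ = Real.sin Δ * Real.sin (Δ + φ) * (‖g₁‖ * ‖g₂‖) := by
    rw [hu, real_inner_smul_right, inner_add_right, real_inner_smul_right,
      real_inner_self_eq_norm_sq, hinner12, htan]
    field_simp
    ring
  have hnormu : ‖u‖ ^ 2 = Real.sin (Δ + φ) ^ 2 * ‖g₂‖ ^ 2 := by
    rw [hu, norm_smul, mul_pow, norm_add_sq_real, real_inner_smul_right, real_inner_comm,
      hinner12, norm_smul, htan]
    simp only [Real.norm_eq_abs, mul_pow, sq_abs, div_pow]
    have hpy : Real.cos φ ^ 2 = 1 - Real.sin φ ^ 2 := by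
      have := Real.sin_sq_add_cos_sq φ; linarith
    field_simp
    ring_nf
    linear_combination (-(Real.sin (Δ + φ) ^ 2 * Real.cos Δ ^ 2)) *
        Real.sin_sq_add_cos_sq φ +
      (Real.sin (Δ + φ) ^ 2 * Real.sin φ ^ 2) *
        Real.sin_sq_add_cos_sq Δ
  have hd := descent_lemma hdiff₁ hconc₁ hL₁ x (α • u)
  rw [← hg1d] at hd
  have hiu : ⟪g₁, α • u⟫ = α * (Real.sin Δ * Real.sin (Δ + φ) * (‖g₁‖ * ‖g₂‖)) := by
    rw [real_inner_smul_right, hinner1u]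
  have hnu : ‖α • u‖ ^ 2 = α ^ 2 * (Real.sin (Δ + φ) ^ 2 * ‖g₂‖ ^ 2) := by
    rw [norm_smul, mul_pow, Real.norm_eq_abs, sq_abs, hnormu]
  rw [hiu, hnu] at hd
  have heq : f₁ x + α * Real.sin (Δ + φ) * ‖g₂‖ *
      (Real.sin Δ * ‖g₁‖ - L * α / 2 * Real.sin (Δ + φ) * ‖g₂‖)
      = f₁ x + α * (Real.sin Δ * Real.sin (Δ + φ) * (‖g₁‖ * ‖g₂‖))
        - L / 2 * (α ^ 2 * (Real.sin (Δ + φ) ^ 2 * ‖g₂‖ ^ 2)) := by ring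
  have part1 : f₁ (x + α • u) ≥ f₁ x + α * Real.sin (Δ + φ) * ‖g₂‖ *
      (Real.sin Δ * ‖g₁‖ - L * α / 2 * Real.sin (Δ + φ) * ‖g₂‖) := by
    rw [heq]; exact hd
  refine ⟨part1, fun hb => ?_⟩
  rcases lt_trichotomy (Real.sin (Δ + φ)) 0 with hneg | hzero | hpos
  · exfalso
    have hD : L * Real.sin (Δ + φ) * ‖g₂‖ < 0 := mul_neg_of_neg_of_pos (mul_neg_of_pos_of_neg hLpos hneg) hn₂
    have : 2 * Real.sin Δ * ‖g₁‖ / (L * Real.sin (Δ + φ) * ‖g₂‖) < 0 :=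
      div_neg_of_pos_of_neg (mul_pos (by linarith : (0:ℝ) < 2 * Real.sin Δ) hn₁) hD
    linarith
  · have hb0 : α ≤ 0 := by
      rw [hzero, mul_zero, zero_mul, div_zero] at hb
      exact hb
    have hα0 : α = 0 := le_antisymm hb0 hα
    subst hα0
    simp
  · have hD : 0 < L * Real.sin (Δ + φ) * ‖g₂‖ := mul_pos (mul_pos hLpos hpos) hn₂
    have hαD : α * (L * Real.sin (Δ + φ) * ‖g₂‖) ≤ 2 * Real.sin Δ * ‖g₁‖ :=
      (le_div_iff₀ hD).mp hb
    have hfac : 0 ≤ Real.sin Δ * ‖g₁‖ - L * α / 2 * Real.sin (Δ + φ) * ‖g₂‖ := by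
      have hr : L * α / 2 * Real.sin (Δ + φ) * ‖g₂‖
          = α * (L * Real.sin (Δ + φ) * ‖g₂‖) / 2 := by ring
      linarith
    have hextra : 0 ≤ α * Real.sin (Δ + φ) * ‖g₂‖ *
        (Real.sin Δ * ‖g₁‖ - L * α / 2 * Real.sin (Δ + φ) * ‖g₂‖) :=
      mul_nonneg (mul_nonneg (mul_nonneg hα hpos.le) hn₂.le) hfac
    linarith
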